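/- arXiv:1110.5847 — 3 statements merged into one kernel-verified Lean document; each statement's English description precedes it below -/
import Mathlib

section
/- For every λ ≥ 0, the matrix Z* = U D_λ Uᵀ is a global minimizer over all real n×n matrices Z of the KLRR objective F(Z) = (1/2)‖Φ − ΦZ‖_F² + λ‖Z‖_*, where K = ΦᵀΦ = U D Uᵀ is the spectral decomposition of the Gram matrix and D_λ is the diagonal matrix with D_λ(i,i) = 1 − λ/σᵢ if σᵢ > λ and 0 otherwise (σᵢ the i-th eigenvalue of K). -/
open Matrix BigOperators Finset

/-- Frobenius norm of a real matrix. -/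
noncomputable def frobNorm {m n : Type*} [Fintype m] [Fintype n] (A : Matrix m n ℝ) : ℝ :=
  Real.sqrt (∑ i, ∑ j, (A i j) ^ 2)

/-- Nuclear norm of a real square matrix: the sum of its singular values,
i.e. of the square roots of the eigenvalues of `Aᴴ * A`. -/
noncomputable def nuclearNorm {n : Type*} [Fintype n] [DecidableEq n] (Z : Matrix n n ℝ) : ℝ :=
  ∑ i, Real.sqrt ((Matrix.isHermitian_conjTranspose_mul_self Z).eigenvalues i)

section Helpers
open Polynomial

lemma my_charpoly_conj {N : Type*} [Fintype N] [DecidableEq N] {R : Type*} [CommRing R]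
    (P A Q : Matrix N N R) (h1 : P * Q = 1) (h2 : Q * P = 1) :
    (P * A * Q).charpoly = A.charpoly := by
  unfold Matrix.charpoly
  have hmap : P.map (C : R →+* R[X]) * Q.map C = 1 := by
    rw [← Matrix.map_mul, h1, Matrix.map_one C (map_zero C) (map_one C)]
  have hc : charmatrix (P * A * Q) = (P.map C) * charmatrix A * (Q.map C) := by
    unfold charmatrix
    rw [Matrix.mul_sub, Matrix.sub_mul]
    congr 1
    · symm
      rw [← (Matrix.scalar_commute (X : R[X]) (fun r => mul_comm _ _) (P.map C)).eq,
        mul_assoc, hmap, mul_one]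
    · rw [RingHom.mapMatrix_apply, RingHom.mapMatrix_apply, Matrix.map_mul, Matrix.map_mul]
  rw [hc, det_mul, det_mul, mul_right_comm, ← det_mul, hmap, det_one, one_mul]

lemma my_charpoly_diagonal {N : Type*} [Fintype N] [DecidableEq N] {R : Type*} [CommRing R]
    (c : N → R) : (Matrix.diagonal c).charpoly = ∏ i, (X - C (c i)) := by
  unfold Matrix.charpoly
  have : charmatrix (Matrix.diagonal c) = Matrix.diagonal (fun i => X - C (c i)) := by
    ext i j
    by_cases h : i = j
    · subst h; simp
    · rw [charmatrix_apply_ne _ _ _ h, Matrix.diagonal_apply_ne _ h, Matrix.diagonal_apply_ne _ h]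
      simp
  rw [this, det_diagonal]

lemma my_sum_sqrt_of_multiset_eq {n : ℕ} {e c : Fin n → ℝ}
    (h : univ.val.map e = univ.val.map c) :
    ∑ i, Real.sqrt (e i) = ∑ i, Real.sqrt (c i) := by
  have h1 : ∑ i, Real.sqrt (e i) = ((univ.val.map e).map Real.sqrt).sum := by
    rw [Multiset.map_map]; rfl
  have h2 : ∑ i, Real.sqrt (c i) = ((univ.val.map c).map Real.sqrt).sum := by
    rw [Multiset.map_map]; rfl
  rw [h1, h2, h]

lemma my_eig_multiset {n : ℕ} {Nm : Matrix (Fin n) (Fin n) ℝ} (hN : Nm.IsHermitian)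
    (V : Matrix (Fin n) (Fin n) ℝ) (c : Fin n → ℝ)
    (hV : V * Vᵀ = 1) (hV' : Vᵀ * V = 1)
    (h : Nm = V * Matrix.diagonal c * Vᵀ) :
    univ.val.map hN.eigenvalues = univ.val.map c := by
  have hW := hN.spectral_theorem
  set W : Matrix (Fin n) (Fin n) ℝ := (hN.eigenvectorUnitary : Matrix (Fin n) (Fin n) ℝ) with hWdef
  have hW1 : W * star W = 1 := Matrix.mem_unitaryGroup_iff.mp hN.eigenvectorUnitary.2
  have hW2 : star W * W = 1 := Matrix.mem_unitaryGroup_iff'.mp hN.eigenvectorUnitary.2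
  have hdiag : Matrix.diagonal (RCLike.ofReal ∘ hN.eigenvalues) = Matrix.diagonal hN.eigenvalues := by
    rw [RCLike.ofReal_real_eq_id]; rfl
  rw [hdiag] at hW
  have hcp1 : Nm.charpoly = ∏ i, (X - C (hN.eigenvalues i)) := by
    conv_lhs => rw [hW, Unitary.conjStarAlgAut_apply]
    rw [my_charpoly_conj W _ (star W) hW1 hW2, my_charpoly_diagonal]
  have hcp2 : Nm.charpoly = ∏ i, (X - C (c i)) := by
    have hQ : V * Vᵀ = 1 := hV
    rw [h, my_charpoly_conj V _ Vᵀ hV hV', my_charpoly_diagonal]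
  have key : ∀ f : Fin n → ℝ, (∏ i, (X - C (f i))) = ((univ.val.map f).map fun a => X - C a).prod := by
    intro f
    rw [Multiset.map_map]; rfl
  have : ((univ.val.map hN.eigenvalues).map fun a => X - C a).prod
      = ((univ.val.map c).map fun a => X - C a).prod := by
    rw [← key, ← key, ← hcp1, ← hcp2]
  calc univ.val.map hN.eigenvalues
      = (((univ.val.map hN.eigenvalues).map fun a => X - C a).prod).roots := by
        rw [Polynomial.roots_multiset_prod_X_sub_C]
    _ = (((univ.val.map c).map fun a => X - C a).prod).roots := by rw [this]
    _ = univ.val.map c := Polynomial.roots_multiset_prod_X_sub_C _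


lemma my_cs {n : ℕ} (f g : Fin n → ℝ) :
    ∑ i, |f i| * |g i| ≤ Real.sqrt (∑ i, (f i)^2) * Real.sqrt (∑ i, (g i)^2) := by
  have h0 : 0 ≤ ∑ i, |f i| * |g i| :=
    Finset.sum_nonneg fun i _ => mul_nonneg (abs_nonneg _) (abs_nonneg _)
  have h1 : (∑ i, |f i| * |g i|)^2 ≤ (∑ i, (f i)^2) * (∑ i, (g i)^2) := by
    have := Finset.sum_mul_sq_le_sq_mul_sq univ (fun i => |f i|) (fun i => |g i|)
    simpa [sq_abs] using this
  calc ∑ i, |f i| * |g i| = Real.sqrt ((∑ i, |f i| * |g i|)^2) := (Real.sqrt_sq h0).symm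
    _ ≤ Real.sqrt ((∑ i, (f i)^2) * (∑ i, (g i)^2)) := Real.sqrt_le_sqrt h1
    _ = _ := Real.sqrt_mul (by positivity) _

lemma my_nuclearNorm_diag {n : ℕ} (U : Matrix (Fin n) (Fin n) ℝ)
    (hU : U * Uᵀ = 1) (hU' : Uᵀ * U = 1) (c : Fin n → ℝ) (hc : ∀ i, 0 ≤ c i) :
    nuclearNorm (U * Matrix.diagonal c * Uᵀ) = ∑ i, c i := by
  set M := U * Matrix.diagonal c * Uᵀ with hM
  have hcc : (fun i => c i * c i) = fun i => c i ^ 2 := by ext i; ring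
  have hMM : Mᴴ * M = U * Matrix.diagonal (fun i => c i ^ 2) * Uᵀ := by
    have hMH : Mᴴ = M := by
      rw [conjTranspose_eq_transpose_of_trivial, hM, Matrix.transpose_mul, Matrix.transpose_mul,
        Matrix.transpose_transpose, Matrix.diagonal_transpose, Matrix.mul_assoc]
    rw [hMH, hM]
    calc (U * Matrix.diagonal c * Uᵀ) * (U * Matrix.diagonal c * Uᵀ)
        = U * (Matrix.diagonal c * ((Uᵀ * U) * (Matrix.diagonal c * Uᵀ))) := by
          simp only [Matrix.mul_assoc]
      _ = U * ((Matrix.diagonal c * Matrix.diagonal c) * Uᵀ) := by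
          rw [hU', Matrix.one_mul, Matrix.mul_assoc]
      _ = U * Matrix.diagonal (fun i => c i ^ 2) * Uᵀ := by
          rw [Matrix.diagonal_mul_diagonal, hcc, Matrix.mul_assoc]
  have hms := my_eig_multiset (Matrix.isHermitian_conjTranspose_mul_self M) U
    (fun i => c i ^ 2) hU hU' hMM
  unfold nuclearNorm
  rw [my_sum_sqrt_of_multiset_eq hms]
  exact Finset.sum_congr rfl fun i _ => Real.sqrt_sq (hc i)

lemma my_abs_diag_le_core {n : ℕ} (Z U V : Matrix (Fin n) (Fin n) ℝ) (e : Fin n → ℝ)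
    (hU : U * Uᵀ = 1) (hV1 : V * Vᵀ = 1) (hV2 : Vᵀ * V = 1)
    (hZZ : Zᵀ * Z = V * Matrix.diagonal e * Vᵀ) :
    ∑ i, |(Uᵀ * Z * U) i i| ≤ ∑ j, Real.sqrt (e j) := by
  classical
  set Y := Uᵀ * Z * V with hYd
  set P := Vᵀ * U with hPd
  have hfact : Uᵀ * Z * U = Y * P := by
    rw [hYd, hPd]
    simp only [Matrix.mul_assoc]
    rw [← Matrix.mul_assoc V Vᵀ U, hV1, Matrix.one_mul]
  have hP : ∀ j, ∑ i, (P j i)^2 = 1 := by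
    intro j
    have h1 : P * Pᵀ = 1 := by
      rw [hPd, Matrix.transpose_mul, Matrix.transpose_transpose]
      calc Vᵀ * U * (Uᵀ * V) = Vᵀ * (U * Uᵀ) * V := by simp only [Matrix.mul_assoc]
        _ = 1 := by rw [hU, Matrix.mul_one, hV2]
    have h2 : (P * Pᵀ) j j = (1 : Matrix (Fin n) (Fin n) ℝ) j j := by rw [h1]
    rw [Matrix.mul_apply, Matrix.one_apply_eq] at h2
    simpa [Matrix.transpose_apply, pow_two] using h2
  have hY : ∀ j, ∑ i, (Y i j)^2 = e j := by
    intro j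
    have h1 : Yᵀ * Y = Matrix.diagonal e := by
      rw [hYd]
      simp only [Matrix.transpose_mul, Matrix.transpose_transpose, Matrix.mul_assoc]
      rw [← Matrix.mul_assoc U Uᵀ (Z * V), hU, Matrix.one_mul,
        ← Matrix.mul_assoc Zᵀ Z V, hZZ]
      simp only [Matrix.mul_assoc]
      rw [hV2, ← Matrix.mul_assoc Vᵀ V _, hV2, Matrix.one_mul, Matrix.mul_one]
    have h2 : (Yᵀ * Y) j j = Matrix.diagonal e j j := by rw [h1]
    rw [Matrix.mul_apply, Matrix.diagonal_apply_eq] at h2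
    simpa [Matrix.transpose_apply, pow_two] using h2
  have step1 : ∑ i, |(Uᵀ * Z * U) i i| ≤ ∑ j, ∑ i, |Y i j| * |P j i| := by
    rw [Finset.sum_comm]
    apply Finset.sum_le_sum
    intro i _
    rw [hfact, Matrix.mul_apply]
    calc |∑ j, Y i j * P j i| ≤ ∑ j, |Y i j * P j i| := Finset.abs_sum_le_sum_abs _ _
      _ = ∑ j, |Y i j| * |P j i| := by simp [abs_mul]
  have step2 : ∑ j, ∑ i, |Y i j| * |P j i| ≤ ∑ j, Real.sqrt (e j) := by
    apply Finset.sum_le_sum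
    intro j _
    calc ∑ i, |Y i j| * |P j i|
        ≤ Real.sqrt (∑ i, (Y i j)^2) * Real.sqrt (∑ i, (P j i)^2) :=
          my_cs (fun i => Y i j) (fun i => P j i)
      _ = Real.sqrt (e j) := by rw [hY j, hP j, Real.sqrt_one, mul_one]
  exact le_trans step1 step2

lemma my_abs_diag_le_nuclear {n : ℕ} (Z U : Matrix (Fin n) (Fin n) ℝ)
    (hU : U * Uᵀ = 1) (hU' : Uᵀ * U = 1) :
    ∑ i, |(Uᵀ * Z * U) i i| ≤ nuclearNorm Z := by
  classical
  have hN := Matrix.isHermitian_conjTranspose_mul_self Z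
  let V : Matrix (Fin n) (Fin n) ℝ := (hN.eigenvectorUnitary : Matrix (Fin n) (Fin n) ℝ)
  have hV1 : V * Vᵀ = 1 := Matrix.mem_unitaryGroup_iff.mp hN.eigenvectorUnitary.2
  have hV2 : Vᵀ * V = 1 := Matrix.mem_unitaryGroup_iff'.mp hN.eigenvectorUnitary.2
  have hspec : Zᵀ * Z = V * Matrix.diagonal hN.eigenvalues * Vᵀ := by
    have h := hN.spectral_theorem
    rw [RCLike.ofReal_real_eq_id, Function.id_comp, Unitary.conjStarAlgAut_apply] at h
    exact h
  exact my_abs_diag_le_core Z U V hN.eigenvalues hU hV1 hV2 hspec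


lemma my_frob_sq {d n : ℕ} (B : Matrix (Fin d) (Fin n) ℝ) :
    frobNorm B ^ 2 = Matrix.trace (Bᵀ * B) := by
  unfold frobNorm
  rw [Real.sq_sqrt (by positivity)]
  simp only [Matrix.trace, Matrix.diag, Matrix.mul_apply, Matrix.transpose_apply, pow_two]
  exact Finset.sum_comm

lemma my_trace_conj {n : ℕ} (U A : Matrix (Fin n) (Fin n) ℝ) (hU' : Uᵀ * U = 1) :
    Matrix.trace (U * A * Uᵀ) = Matrix.trace A := by
  rw [Matrix.trace_mul_comm (U * A) Uᵀ, ← Matrix.mul_assoc, hU', Matrix.one_mul]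

lemma my_trace_diag {n : ℕ} (A : Matrix (Fin n) (Fin n) ℝ) (σ : Fin n → ℝ) :
    Matrix.trace (Aᵀ * Matrix.diagonal σ * A) = ∑ i, σ i * ∑ j, (A i j)^2 := by
  rw [Matrix.mul_assoc]
  simp only [Matrix.trace, Matrix.diag, Matrix.mul_apply, Matrix.transpose_apply,
    Matrix.diagonal_apply, ite_mul, zero_mul, Finset.sum_ite_eq, Finset.mem_univ, if_pos]
  rw [Finset.sum_comm]
  apply Finset.sum_congr rfl
  intro i _
  rw [Finset.mul_sum]
  apply Finset.sum_congr rfl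
  intro j _
  ring

lemma my_frob_eq {d n : ℕ} (Φ : Matrix (Fin d) (Fin n) ℝ)
    (U : Matrix (Fin n) (Fin n) ℝ) (σ : Fin n → ℝ)
    (hU : U * Uᵀ = 1) (hU' : Uᵀ * U = 1)
    (hK : Φᵀ * Φ = U * Matrix.diagonal σ * Uᵀ) (Z : Matrix (Fin n) (Fin n) ℝ) :
    frobNorm (Φ - Φ * Z) ^ 2 = ∑ i, σ i * ∑ j, ((Uᵀ * (1 - Z) * U) i j)^2 := by
  have hB : Φ - Φ * Z = Φ * (1 - Z) := by rw [Matrix.mul_sub, Matrix.mul_one]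
  set A := Uᵀ * (1 - Z) * U with hA
  have hrec : 1 - Z = U * A * Uᵀ := by
    rw [hA]
    calc 1 - Z = (U * Uᵀ) * (1 - Z) * (U * Uᵀ) := by rw [hU, Matrix.one_mul, Matrix.mul_one]
      _ = U * (Uᵀ * (1 - Z) * U) * Uᵀ := by simp only [Matrix.mul_assoc]
  rw [my_frob_sq, hB, Matrix.transpose_mul]
  have hmid : (1 - Z)ᵀ * Φᵀ * (Φ * (1 - Z)) = U * (Aᵀ * Matrix.diagonal σ * A) * Uᵀ := by
    rw [Matrix.mul_assoc ((1-Z)ᵀ) Φᵀ _, ← Matrix.mul_assoc Φᵀ Φ _, hK]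
    conv_lhs => rw [hrec]
    rw [Matrix.transpose_mul, Matrix.transpose_mul, Matrix.transpose_transpose]
    simp only [Matrix.mul_assoc]
    rw [← Matrix.mul_assoc Uᵀ U _, hU', Matrix.one_mul,
        ← Matrix.mul_assoc Uᵀ U _, hU', Matrix.one_mul]
  rw [hmid, my_trace_conj _ _ hU', my_trace_diag]

lemma my_scalar (s lam t : ℝ) (hs : 0 ≤ s) (hlam : 0 ≤ lam) :
    (1/2) * s * (1 - (if lam < s then 1 - lam / s else 0))^2
      + lam * (if lam < s then 1 - lam / s else 0)
      ≤ (1/2) * s * (1 - t)^2 + lam * |t| := by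
  by_cases h : lam < s
  · simp only [if_pos h]
    have hs0 : 0 < s := lt_of_le_of_lt hlam h
    have habs : lam * t ≤ lam * |t| := mul_le_mul_of_nonneg_left (le_abs_self t) hlam
    have hdiv : s * (lam / s) = lam := by field_simp
    nlinarith [sq_nonneg (s * (1 - t) - lam), sq_nonneg (lam / s), mul_pos hs0 hs0]
  · simp only [if_neg h]
    push_neg at h
    have habs : s * |t| ≤ lam * |t| := mul_le_mul_of_nonneg_right h (abs_nonneg t)
    have habs2 : s * t ≤ s * |t| := mul_le_mul_of_nonneg_left (le_abs_self t) hs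
    nlinarith [mul_nonneg hs (sq_nonneg t)]


end Helpers

/-- For every λ ≥ 0, the matrix `Z* = U D_λ Uᵀ` is a global minimizer of the
KLRR objective `F(Z) = (1/2)‖Φ − ΦZ‖_F² + λ‖Z‖_*`, where `K = ΦᵀΦ = U D Uᵀ` is the spectral
decomposition of the Gram matrix and `D_λ(i,i) = 1 − λ/σᵢ` if `σᵢ > λ`, `0` otherwise. -/
theorem klrr_closed_form_solution {d n : ℕ}
    (Φ : Matrix (Fin d) (Fin n) ℝ) (lam : ℝ) (hlam : 0 ≤ lam)
    (U : Matrix (Fin n) (Fin n) ℝ) (σ : Fin n → ℝ)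
    (hU : U * Uᵀ = 1) (hU' : Uᵀ * U = 1) (hσ : ∀ i, 0 ≤ σ i)
    (hK : Φᵀ * Φ = U * Matrix.diagonal σ * Uᵀ)
    (Zstar : Matrix (Fin n) (Fin n) ℝ)
    (hZstar : Zstar =
      U * Matrix.diagonal (fun i => if lam < σ i then 1 - lam / σ i else 0) * Uᵀ) :
    ∀ Z : Matrix (Fin n) (Fin n) ℝ,
      (1 / 2) * (frobNorm (Φ - Φ * Zstar)) ^ 2 + lam * nuclearNorm Zstar
        ≤ (1 / 2) * (frobNorm (Φ - Φ * Z)) ^ 2 + lam * nuclearNorm Z := by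
  intro Z
  have hdl0 : ∀ i, 0 ≤ (if lam < σ i then 1 - lam / σ i else 0) := by
    intro i
    by_cases h : lam < σ i
    · simp only [if_pos h]
      have : lam / σ i < 1 := (div_lt_one (lt_of_le_of_lt hlam h)).mpr h
      linarith
    · simp [if_neg h]
  have hA1 : ∀ Zz : Matrix (Fin n) (Fin n) ℝ, Uᵀ * (1 - Zz) * U = 1 - Uᵀ * Zz * U := by
    intro Zz
    rw [Matrix.mul_sub, Matrix.mul_one, Matrix.sub_mul, hU', Matrix.mul_assoc]
  have hnucstar : nuclearNorm Zstar = ∑ i, (if lam < σ i then 1 - lam / σ i else 0) := by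
    rw [hZstar]
    exact my_nuclearNorm_diag U hU hU' _ (fun i => hdl0 i)
  have hAstar : Uᵀ * (1 - Zstar) * U
      = Matrix.diagonal (fun i => 1 - (if lam < σ i then 1 - lam / σ i else 0)) := by
    rw [hA1, hZstar]
    have hmid : Uᵀ * (U * Matrix.diagonal (fun i => if lam < σ i then 1 - lam / σ i else 0) * Uᵀ)
        * U = Matrix.diagonal (fun i => if lam < σ i then 1 - lam / σ i else 0) := by
      simp only [Matrix.mul_assoc]
      rw [← Matrix.mul_assoc Uᵀ U _, hU', Matrix.one_mul, Matrix.mul_one]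
    rw [hmid]
    ext i j
    by_cases hij : i = j
    · subst hij; simp [Matrix.diagonal_apply_eq, Matrix.one_apply_eq]
    · simp [Matrix.diagonal_apply_ne _ hij, Matrix.one_apply_ne hij]
  have hfrobstar : frobNorm (Φ - Φ * Zstar) ^ 2
      = ∑ i, σ i * (1 - (if lam < σ i then 1 - lam / σ i else 0))^2 := by
    rw [my_frob_eq Φ U σ hU hU' hK Zstar, hAstar]
    apply Finset.sum_congr rfl
    intro i _
    congr 1
    rw [Finset.sum_eq_single i]
    · simp
    · intro b _ hb
      rw [Matrix.diagonal_apply_ne _ (Ne.symm hb)]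
      simp
    · intro hi; exact absurd (Finset.mem_univ i) hi
  calc (1 / 2) * (frobNorm (Φ - Φ * Zstar)) ^ 2 + lam * nuclearNorm Zstar
      = ∑ i, ((1/2) * σ i * (1 - (if lam < σ i then 1 - lam / σ i else 0))^2
          + lam * (if lam < σ i then 1 - lam / σ i else 0)) := by
        rw [hfrobstar, hnucstar, Finset.mul_sum, Finset.mul_sum, ← Finset.sum_add_distrib]
        apply Finset.sum_congr rfl
        intro i _
        ring
    _ ≤ ∑ i, ((1/2) * σ i * (1 - (Uᵀ * Z * U) i i)^2 + lam * |(Uᵀ * Z * U) i i|) :=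
        Finset.sum_le_sum fun i _ => my_scalar (σ i) lam ((Uᵀ * Z * U) i i) (hσ i) hlam
    _ ≤ (1 / 2) * (frobNorm (Φ - Φ * Z)) ^ 2 + lam * nuclearNorm Z := by
        rw [Finset.sum_add_distrib]
        have h1 : ∑ i, (1/2) * σ i * (1 - (Uᵀ * Z * U) i i)^2
            ≤ (1/2) * (frobNorm (Φ - Φ * Z)) ^ 2 := by
          rw [my_frob_eq Φ U σ hU hU' hK Z, Finset.mul_sum]
          apply Finset.sum_le_sum
          intro i _
          have hAd : (Uᵀ * (1 - Z) * U) i i = 1 - (Uᵀ * Z * U) i i := by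
            rw [hA1 Z, Matrix.sub_apply, Matrix.one_apply_eq]
          have hsingle : ((Uᵀ * (1 - Z) * U) i i)^2 ≤ ∑ j, ((Uᵀ * (1 - Z) * U) i j)^2 :=
            Finset.single_le_sum (f := fun j => ((Uᵀ * (1 - Z) * U) i j)^2) (fun j _ => sq_nonneg _) (Finset.mem_univ i)
          rw [← hAd]
          have hm := mul_le_mul_of_nonneg_left hsingle (hσ i)
          linarith
        have h2 : ∑ i, lam * |(Uᵀ * Z * U) i i| ≤ lam * nuclearNorm Z := by
          rw [← Finset.mul_sum]
          exact mul_le_mul_of_nonneg_left (my_abs_diag_le_nuclear Z U hU hU') hlam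
        linarith
end

section
/- Let S be a real n×n diagonal matrix with nonnegative diagonal entries s₁, …, sₙ and let λ > 0. Then over all real n×n matrices Ẑ, the objective (1/2)‖S − SẐ‖_F² + λ‖Ẑ‖_* is minimized by the diagonal matrix Ẑ* with Ẑ*(i,i) = max(1 − λ/sᵢ², 0) (interpreted as 0 when sᵢ = 0); moreover every minimizer is a diagonal matrix. -/
open Matrix BigOperators Finset

section Helpers

lemma frob_sq {m n : Type*} [Fintype m] [Fintype n] (A : Matrix m n ℝ) :
    frobNorm A ^ 2 = ∑ i, ∑ j, (A i j) ^ 2 :=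
  Real.sq_sqrt (by positivity)

lemma exists_colvecs {n : ℕ} (Z : Matrix (Fin n) (Fin n) ℝ) :
    ∃ (V W : Matrix (Fin n) (Fin n) ℝ) (lam : Fin n → ℝ),
      (∀ k, 0 ≤ lam k) ∧
      nuclearNorm Z = ∑ k, Real.sqrt (lam k) ∧
      (∀ k, ∑ i, (W i k)^2 = lam k) ∧
      (∀ k, ∑ i, (V i k)^2 = 1) ∧
      (∀ i j, Z i j = ∑ k, W i k * V j k) := by
  have h := Matrix.isHermitian_conjTranspose_mul_self Z
  set V : Matrix (Fin n) (Fin n) ℝ := (h.eigenvectorUnitary : Matrix (Fin n) (Fin n) ℝ) with hV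
  refine ⟨V, Z * V, h.eigenvalues, ?_, rfl, ?_, ?_, ?_⟩
  · exact (Matrix.posSemidef_conjTranspose_mul_self Z).eigenvalues_nonneg
  · intro k
    have h1 : star V * (Zᴴ * Z) * V = diagonal (RCLike.ofReal ∘ h.eigenvalues) :=
      by
        have := h.conjStarAlgAut_star_eigenvectorUnitary
        simp only [Unitary.conjStarAlgAut_apply, Unitary.coe_star, star_star] at this
        exact this
    have h2 : (Z * V)ᴴ * (Z * V) = diagonal (RCLike.ofReal ∘ h.eigenvalues) := by
      rw [conjTranspose_mul, ← Matrix.star_eq_conjTranspose V]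
      rw [← h1]
      rw [Matrix.mul_assoc, Matrix.mul_assoc, Matrix.mul_assoc]
    have := congrFun (congrFun h2 k) k
    simp [Matrix.mul_apply, conjTranspose_apply, diagonal_apply_eq,
      -conjTranspose_eq_transpose_of_trivial] at this
    rw [← this]
    refine Finset.sum_congr rfl fun i _ => ?_
    simp only [Matrix.mul_apply, sq]
    congr 1
    exact Finset.sum_congr rfl fun x _ => mul_comm _ _
  · intro k
    have h3 : star V * V = 1 := Unitary.coe_star_mul_self h.eigenvectorUnitary
    have := congrFun (congrFun h3 k) k
    simp [Matrix.mul_apply, Matrix.star_eq_conjTranspose, conjTranspose_apply,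
      Matrix.one_apply] at this
    rw [← this]
    exact Finset.sum_congr rfl fun i _ => by ring
  · intro i j
    have h4 : V * star V = 1 := Unitary.coe_mul_star_self h.eigenvectorUnitary
    have : Z = (Z * V) * Vᴴ := by
      rw [Matrix.mul_assoc, ← Matrix.star_eq_conjTranspose, h4, Matrix.mul_one]
    rw [congrFun (congrFun this i) j]
    simp [Matrix.mul_apply, conjTranspose_apply]

lemma cs_sqrt {n : ℕ} (a b : Fin n → ℝ) :
    ∑ i, a i * b i ≤ Real.sqrt (∑ i, (a i)^2) * Real.sqrt (∑ i, (b i)^2) := by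
  have h := Finset.sum_mul_sq_le_sq_mul_sq Finset.univ a b
  have h2 : ∑ i, a i * b i ≤ |∑ i, a i * b i| := le_abs_self _
  refine h2.trans ?_
  rw [← Real.sqrt_sq_eq_abs, ← Real.sqrt_mul (by positivity)]
  exact Real.sqrt_le_sqrt h

lemma cs_eq {n : ℕ} (a b : Fin n → ℝ) (hb : ∑ i, (b i)^2 = 1)
    (heq : ∑ i, a i * b i = Real.sqrt (∑ i, (a i)^2)) :
    ∀ i, a i = (∑ j, a j * b j) * b i := by
  set t := ∑ j, a j * b j with ht
  have ha : ∑ i, (a i)^2 = t^2 := by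
    rw [heq, Real.sq_sqrt (by positivity)]
  have key : ∑ i, (a i - t * b i)^2 = 0 := by
    have : ∀ i, (a i - t * b i)^2 = (a i)^2 - 2*t*(a i * b i) + t^2 * (b i)^2 := by
      intro i; ring
    simp_rw [this, Finset.sum_add_distrib, Finset.sum_sub_distrib, ← Finset.mul_sum, hb, ← ht,
      ha]
    ring
  intro i
  have := (Finset.sum_eq_zero_iff_of_nonneg (fun j _ => sq_nonneg (a j - t * b j))).1 key i
    (Finset.mem_univ i)
  have := sq_eq_zero_iff.1 this
  linarith

lemma sum_abs_diag_le {n : ℕ} (Z : Matrix (Fin n) (Fin n) ℝ) :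
    ∑ i, |Z i i| ≤ nuclearNorm Z := by
  obtain ⟨V, W, lam, hlam, hnn, hW, hV, hZ⟩ := exists_colvecs Z
  rw [hnn]
  calc ∑ i, |Z i i| ≤ ∑ i, ∑ k, |W i k| * |V i k| := by
        refine Finset.sum_le_sum fun i _ => ?_
        rw [hZ i i]
        refine (Finset.abs_sum_le_sum_abs _ _).trans ?_
        exact Finset.sum_le_sum fun k _ => (abs_mul _ _).le
    _ = ∑ k, ∑ i, |W i k| * |V i k| := Finset.sum_comm
    _ ≤ ∑ k, Real.sqrt (lam k) := by
        refine Finset.sum_le_sum fun k _ => ?_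
        have := cs_sqrt (fun i => |W i k|) (fun i => |V i k|)
        simp only [sq_abs] at this
        rw [hW k, hV k, Real.sqrt_one, mul_one] at this
        exact this

lemma repr_of_trace_eq {n : ℕ} (Z : Matrix (Fin n) (Fin n) ℝ)
    (h : ∑ i, Z i i = nuclearNorm Z) :
    ∃ (V : Matrix (Fin n) (Fin n) ℝ) (t : Fin n → ℝ),
      (∀ k, 0 ≤ t k) ∧ ∀ i j, Z i j = ∑ k, t k * V i k * V j k := by
  obtain ⟨V, W, lam, hlam, hnn, hW, hV, hZ⟩ := exists_colvecs Z
  set c : Fin n → ℝ := fun k => ∑ i, W i k * V i k with hc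
  have hck : ∀ k, c k ≤ Real.sqrt (lam k) := by
    intro k
    have := cs_sqrt (fun i => W i k) (fun i => V i k)
    rw [hW k, hV k, Real.sqrt_one, mul_one] at this
    exact this
  have hsum : ∑ k, c k = ∑ k, Real.sqrt (lam k) := by
    rw [← hnn, ← h]
    rw [Finset.sum_comm (γ := Fin n)]
    exact Finset.sum_congr rfl fun i _ => (hZ i i).symm
  have hceq : ∀ k ∈ Finset.univ, c k = Real.sqrt (lam k) :=
    ((Finset.sum_eq_sum_iff_of_le fun k _ => hck k).1 hsum)
  refine ⟨V, c, fun k => ?_, fun i j => ?_⟩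
  · rw [hceq k (Finset.mem_univ k)]; exact Real.sqrt_nonneg _
  · rw [hZ i j]
    refine Finset.sum_congr rfl fun k _ => ?_
    have := cs_eq (fun i => W i k) (fun i => V i k) (hV k)
      (by rw [hW k]; exact hceq k (Finset.mem_univ k))
    rw [this i]

end Helpers

section DiagNuclear
open Polynomial

lemma nuclearNorm_diagonal {n : ℕ} (d : Fin n → ℝ) :
    nuclearNorm (Matrix.diagonal d) = ∑ i, |d i| := by
  set D := Matrix.diagonal d with hD
  have h := Matrix.isHermitian_conjTranspose_mul_self D
  have hG : Dᴴ * D = Matrix.diagonal (fun i => d i ^ 2) := by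
    rw [hD, Matrix.diagonal_conjTranspose, Matrix.diagonal_mul_diagonal]
    funext i
    simp [sq, Pi.star_apply]
  set V : Matrix (Fin n) (Fin n) ℝ := (h.eigenvectorUnitary : Matrix (Fin n) (Fin n) ℝ) with hV
  have hVV : V * star V = 1 := Unitary.coe_mul_star_self h.eigenvectorUnitary
  have hspec : Dᴴ * D = V * Matrix.diagonal (RCLike.ofReal ∘ h.eigenvalues) * star V :=
    by have := h.spectral_theorem; rwa [Unitary.conjStarAlgAut_apply] at this
  have hofReal : Matrix.diagonal (RCLike.ofReal ∘ h.eigenvalues)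
      = Matrix.diagonal h.eigenvalues := by
    congr 1
  have key : ∀ x : ℝ, ∏ k, (x - h.eigenvalues k) = ∏ i, (x - d i ^ 2) := by
    intro x
    have e1 : x • (1 : Matrix (Fin n) (Fin n) ℝ) - Dᴴ * D
        = V * (Matrix.diagonal (fun k => x - h.eigenvalues k)) * star V := by
      have hd : Matrix.diagonal (fun k => x - h.eigenvalues k)
          = x • (1 : Matrix (Fin n) (Fin n) ℝ) - Matrix.diagonal h.eigenvalues := by
        rw [Matrix.smul_one_eq_diagonal, ← Matrix.diagonal_sub]
      have hx : V * (x • (1 : Matrix (Fin n) (Fin n) ℝ)) * star V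
          = x • (1 : Matrix (Fin n) (Fin n) ℝ) := by
        rw [Matrix.mul_smul, Matrix.mul_one, Matrix.smul_mul, hVV]
      have h2 : V * Matrix.diagonal h.eigenvalues * star V = Dᴴ * D := by
        rw [← hofReal]; exact hspec.symm
      rw [hd, Matrix.mul_sub, Matrix.sub_mul, hx, h2]
    have e2 : x • (1 : Matrix (Fin n) (Fin n) ℝ) - Dᴴ * D
        = Matrix.diagonal (fun i => x - d i ^ 2) := by
      rw [hG, Matrix.smul_one_eq_diagonal, ← Matrix.diagonal_sub]
    have := congrArg Matrix.det (e1.symm.trans e2)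
    rw [Matrix.det_mul, Matrix.det_mul, mul_comm (V.det), mul_assoc, ← Matrix.det_mul, hVV,
      Matrix.det_one, mul_one, Matrix.det_diagonal, Matrix.det_diagonal] at this
    exact this
  have hpq : (∏ k, (X - C (h.eigenvalues k))) = ∏ i, (X - C (d i ^ 2)) := by
    apply Polynomial.funext
    intro x
    simpa [Polynomial.eval_prod] using key x
  have hms : Finset.univ.val.map h.eigenvalues
      = Finset.univ.val.map (fun i => d i ^ 2) := by
    have r1 : (∏ k, (X - C (h.eigenvalues k))).roots = Finset.univ.val.map h.eigenvalues := by
      rw [Finset.prod_eq_multiset_prod]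
      have : Multiset.map (fun k => X - C (h.eigenvalues k)) Finset.univ.val
          = Multiset.map (fun a : ℝ => X - C a) (Finset.univ.val.map h.eigenvalues) :=
        (Multiset.map_map (fun a : ℝ => X - C a) h.eigenvalues Finset.univ.val).symm
      rw [this]
      exact Polynomial.roots_multiset_prod_X_sub_C _
    have r2 : (∏ i, (X - C (d i ^ 2))).roots = Finset.univ.val.map (fun i => d i ^ 2) := by
      rw [Finset.prod_eq_multiset_prod]
      have : Multiset.map (fun i => X - C (d i ^ 2)) Finset.univ.val
          = Multiset.map (fun a : ℝ => X - C a) (Finset.univ.val.map (fun i => d i ^ 2)) :=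
        (Multiset.map_map (fun a : ℝ => X - C a) (fun i => d i ^ 2) Finset.univ.val).symm
      rw [this]
      exact Polynomial.roots_multiset_prod_X_sub_C _
    rw [← r1, ← r2, hpq]
  have : ∑ k, Real.sqrt (h.eigenvalues k) = ∑ i, Real.sqrt (d i ^ 2) := by
    rw [Finset.sum_eq_multiset_sum, Finset.sum_eq_multiset_sum]
    have e1 : Multiset.map (fun k => Real.sqrt (h.eigenvalues k)) Finset.univ.val
        = Multiset.map Real.sqrt (Finset.univ.val.map h.eigenvalues) :=
      (Multiset.map_map Real.sqrt h.eigenvalues Finset.univ.val).symm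
    have e2 : Multiset.map (fun i => Real.sqrt (d i ^ 2)) Finset.univ.val
        = Multiset.map Real.sqrt (Finset.univ.val.map (fun i => d i ^ 2)) :=
      (Multiset.map_map Real.sqrt (fun i => d i ^ 2) Finset.univ.val).symm
    rw [e1, e2, hms]
  rw [nuclearNorm]
  rw [this]
  exact Finset.sum_congr rfl fun i _ => Real.sqrt_sq_eq_abs _

end DiagNuclear

section Scalar

lemma scalar_strict (s lam t : ℝ) (hs : 0 ≤ s) (hlam : 0 < lam)
    (ht : t ≠ (if s = 0 then 0 else max (1 - lam / s^2) 0)) :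
    (1/2)*s^2*(1 - (if s = 0 then 0 else max (1 - lam / s^2) 0))^2
      + lam * (if s = 0 then 0 else max (1 - lam / s^2) 0)
    < (1/2)*s^2*(1-t)^2 + lam*|t| := by
  rcases eq_or_ne s 0 with h0 | h0
  · subst h0
    simp only [if_true] at ht ⊢
    have h1 : 0 < lam * |t| := mul_pos hlam (abs_pos.mpr ht)
    nlinarith
  · have hs2 : 0 < s^2 := by positivity
    simp only [h0, if_false] at ht ⊢
    rcases le_or_gt (1 - lam / s^2) 0 with hm | hm
    · rw [max_eq_right hm] at ht ⊢
      have hsl : s^2 ≤ lam := by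
        have h1 : (1:ℝ) ≤ lam / s^2 := by linarith
        calc s^2 = 1 * s^2 := (one_mul _).symm
          _ ≤ (lam / s^2) * s^2 := by nlinarith
          _ = lam := by field_simp
      have htabs : 0 < |t| := abs_pos.mpr ht
      have habs : t ≤ |t| := le_abs_self t
      have f1 : s^2 * t ≤ s^2 * |t| := mul_le_mul_of_nonneg_left habs hs2.le
      have f2 : 0 ≤ (lam - s^2) * |t| := mul_nonneg (by linarith) htabs.le
      have f3 : 0 < s^2 * (|t| * |t|) := mul_pos hs2 (mul_pos htabs htabs)
      nlinarith [sq_abs t]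
    · rw [max_eq_left hm.le] at ht ⊢
      obtain ⟨u, hu⟩ : ∃ u : ℝ, lam / s^2 = u := ⟨_, rfl⟩
      rw [hu] at ht hm ⊢
      have hlu : lam = s^2 * u := by rw [← hu]; field_simp
      subst hlu
      have hpos : 0 < (t - (1 - u))^2 :=
        lt_of_le_of_ne (sq_nonneg _) (Ne.symm (pow_ne_zero 2 (sub_ne_zero.mpr ht)))
      have habs : t ≤ |t| := le_abs_self t
      have f1 : s^2 * u * t ≤ s^2 * u * |t| := mul_le_mul_of_nonneg_left habs hlam.le
      nlinarith [mul_pos hs2 hpos]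

lemma scalar_min (s lam t : ℝ) (hs : 0 ≤ s) (hlam : 0 < lam) :
    (1/2)*s^2*(1 - (if s = 0 then 0 else max (1 - lam / s^2) 0))^2
      + lam * (if s = 0 then 0 else max (1 - lam / s^2) 0)
    ≤ (1/2)*s^2*(1-t)^2 + lam*|t| := by
  rcases eq_or_ne t (if s = 0 then 0 else max (1 - lam / s^2) 0) with h | h
  · subst h
    have h0 : 0 ≤ (if s = 0 then 0 else max (1 - lam / s^2) 0) := by
      split <;> simp [le_max_right]
    rw [abs_of_nonneg h0]
  · exact (scalar_strict s lam t hs hlam h).le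

end Scalar

section Frob

lemma frob_decomp {n : ℕ} (s : Fin n → ℝ) (Z : Matrix (Fin n) (Fin n) ℝ) :
    ∑ i, ∑ j, ((Matrix.diagonal s - Matrix.diagonal s * Z) i j)^2
      = ∑ i, ((s i)^2 * (1 - Z i i)^2
          + ∑ j ∈ Finset.univ.erase i, (s i)^2 * (Z i j)^2) := by
  refine Finset.sum_congr rfl fun i _ => ?_
  rw [← Finset.add_sum_erase _ _ (Finset.mem_univ i)]
  congr 1
  · simp only [Matrix.sub_apply, Matrix.diagonal_apply_eq, Matrix.diagonal_mul]
    ring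
  · refine Finset.sum_congr rfl fun j hj => ?_
    have hji : j ≠ i := Finset.ne_of_mem_erase hj
    simp only [Matrix.sub_apply, Matrix.diagonal_apply_ne' _ hji, Matrix.diagonal_mul]
    ring

lemma frob_diag {n : ℕ} (v : Fin n → ℝ) :
    ∑ i, ∑ j, ((Matrix.diagonal v) i j)^2 = ∑ i, (v i)^2 := by
  refine Finset.sum_congr rfl fun i _ => ?_
  rw [Finset.sum_eq_single_of_mem i (Finset.mem_univ i)]
  · rw [Matrix.diagonal_apply_eq]
  · intro j _ hji
    rw [Matrix.diagonal_apply_ne' _ hji]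
    simp

end Frob
/-- For a diagonal `S` with nonnegative diagonal entries and `λ > 0`, the
objective `(1/2)‖S − SẐ‖_F² + λ‖Ẑ‖_*` is minimized by the diagonal matrix with entries
`max (1 − λ/sᵢ²) 0` (interpreted as `0` when `sᵢ = 0`), and every minimizer is diagonal. -/
theorem diagonal_klrr_solution {n : ℕ} (s : Fin n → ℝ) (hs : ∀ i, 0 ≤ s i)
    (lam : ℝ) (hlam : 0 < lam)
    (S : Matrix (Fin n) (Fin n) ℝ) (hS : S = Matrix.diagonal s)
    (Zstar : Matrix (Fin n) (Fin n) ℝ)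
    (hZstar : Zstar =
      Matrix.diagonal (fun i => if s i = 0 then 0 else max (1 - lam / (s i) ^ 2) 0)) :
    (∀ Z : Matrix (Fin n) (Fin n) ℝ,
      (1 / 2) * (frobNorm (S - S * Zstar)) ^ 2 + lam * nuclearNorm Zstar
        ≤ (1 / 2) * (frobNorm (S - S * Z)) ^ 2 + lam * nuclearNorm Z) ∧
    (∀ Z : Matrix (Fin n) (Fin n) ℝ,
      (∀ W : Matrix (Fin n) (Fin n) ℝ,
        (1 / 2) * (frobNorm (S - S * Z)) ^ 2 + lam * nuclearNorm Z
          ≤ (1 / 2) * (frobNorm (S - S * W)) ^ 2 + lam * nuclearNorm W) →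
      ∀ i j, i ≠ j → Z i j = 0) := by
  subst hS hZstar
  set d : Fin n → ℝ := fun i => if s i = 0 then 0 else max (1 - lam / (s i) ^ 2) 0 with hd
  have hd_if : ∀ i, (if s i = 0 then 0 else max (1 - lam / (s i) ^ 2) 0) = d i := fun _ => rfl
  have hd0 : ∀ i, 0 ≤ d i := by
    intro i
    rw [← hd_if i]
    split
    · exact le_rfl
    · exact le_max_right _ _
  -- objective value at Zstar
  have hSZstar : Matrix.diagonal s - Matrix.diagonal s * Matrix.diagonal d
      = Matrix.diagonal (fun i => s i * (1 - d i)) := by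
    rw [Matrix.diagonal_mul_diagonal, Matrix.diagonal_sub]
    have he : (fun i => s i - s i * d i) = fun i => s i * (1 - d i) := by
      funext i; ring
    rw [he]
  have hFstar : (1 / 2) * (frobNorm (Matrix.diagonal s
        - Matrix.diagonal s * Matrix.diagonal d)) ^ 2 + lam * nuclearNorm (Matrix.diagonal d)
      = ∑ i, ((1/2)*(s i)^2*(1 - d i)^2 + lam * d i) := by
    rw [hSZstar, frob_sq, frob_diag, nuclearNorm_diagonal]
    have h1 : ∑ i, |d i| = ∑ i, d i := Finset.sum_congr rfl fun i _ => abs_of_nonneg (hd0 i)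
    rw [h1, Finset.sum_add_distrib, Finset.mul_sum, Finset.mul_sum]
    congr 1
    refine Finset.sum_congr rfl fun i _ => ?_
    ring
  -- decomposition of the objective for arbitrary Z
  have hF : ∀ Z : Matrix (Fin n) (Fin n) ℝ,
      (1 / 2) * (frobNorm (Matrix.diagonal s - Matrix.diagonal s * Z)) ^ 2
          + lam * nuclearNorm Z
        = ∑ i, ((1/2)*(s i)^2*(1 - Z i i)^2 + lam * |Z i i|)
          + (1/2) * (∑ i, ∑ j ∈ Finset.univ.erase i, (s i)^2 * (Z i j)^2)
          + lam * (nuclearNorm Z - ∑ i, |Z i i|) := by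
    intro Z
    rw [frob_sq, frob_decomp s Z, Finset.sum_add_distrib]
    have h1 : ∑ i, ((1/2)*(s i)^2*(1 - Z i i)^2 + lam * |Z i i|)
        = (1/2) * ∑ i, (s i)^2*(1 - Z i i)^2 + lam * ∑ i, |Z i i| := by
      rw [Finset.sum_add_distrib, Finset.mul_sum, Finset.mul_sum]
      congr 1
      exact Finset.sum_congr rfl fun i _ => by ring
    rw [h1]
    ring
  have hRR : ∀ Z : Matrix (Fin n) (Fin n) ℝ,
      0 ≤ ∑ i, ∑ j ∈ Finset.univ.erase i, (s i)^2 * (Z i j)^2 := by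
    intro Z
    refine Finset.sum_nonneg fun i _ => Finset.sum_nonneg fun j _ => by positivity
  have hterm : ∀ Z : Matrix (Fin n) (Fin n) ℝ, ∀ i : Fin n,
      (1/2)*(s i)^2*(1 - d i)^2 + lam * d i
        ≤ (1/2)*(s i)^2*(1 - Z i i)^2 + lam * |Z i i| := by
    intro Z i
    have := scalar_min (s i) lam (Z i i) (hs i) hlam
    rwa [hd_if i] at this
  have hge : ∀ Z : Matrix (Fin n) (Fin n) ℝ,
      ∑ i, ((1/2)*(s i)^2*(1 - d i)^2 + lam * d i)
        ≤ (1 / 2) * (frobNorm (Matrix.diagonal s - Matrix.diagonal s * Z)) ^ 2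
          + lam * nuclearNorm Z := by
    intro Z
    rw [hF Z]
    have h1 : ∑ i, ((1/2)*(s i)^2*(1 - d i)^2 + lam * d i)
        ≤ ∑ i, ((1/2)*(s i)^2*(1 - Z i i)^2 + lam * |Z i i|) :=
      Finset.sum_le_sum fun i _ => hterm Z i
    have h2 := hRR Z
    have h3 := sum_abs_diag_le Z
    nlinarith
  constructor
  · intro Z
    rw [hFstar]
    exact hge Z
  · intro Z hmin i j hij
    have hFle := hmin (Matrix.diagonal d)
    rw [hFstar] at hFle
    have hFge := hge Z
    have hFeq : (1 / 2) * (frobNorm (Matrix.diagonal s - Matrix.diagonal s * Z)) ^ 2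
        + lam * nuclearNorm Z = ∑ i, ((1/2)*(s i)^2*(1 - d i)^2 + lam * d i) :=
      le_antisymm hFle hFge
    rw [hF Z] at hFeq
    have h1 : ∑ k, ((1/2)*(s k)^2*(1 - d k)^2 + lam * d k)
        ≤ ∑ k, ((1/2)*(s k)^2*(1 - Z k k)^2 + lam * |Z k k|) :=
      Finset.sum_le_sum fun k _ => hterm Z k
    have h2 := hRR Z
    have h3 := sum_abs_diag_le Z
    -- the three slack equalities
    have hA : ∑ k, ((1/2)*(s k)^2*(1 - Z k k)^2 + lam * |Z k k|)
        = ∑ k, ((1/2)*(s k)^2*(1 - d k)^2 + lam * d k) := by nlinarith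
    have hB : ∑ k, ∑ l ∈ Finset.univ.erase k, (s k)^2 * (Z k l)^2 = 0 := by nlinarith
    have hC : nuclearNorm Z = ∑ k, |Z k k| := by nlinarith
    -- diagonal entries are forced
    have hdiagZ : ∀ k, Z k k = d k := by
      intro k
      by_contra hk
      have hstrict := scalar_strict (s k) lam (Z k k) (hs k) hlam (by rwa [hd_if k])
      rw [hd_if k] at hstrict
      have hlt : ∑ m, ((1/2)*(s m)^2*(1 - d m)^2 + lam * d m)
          < ∑ m, ((1/2)*(s m)^2*(1 - Z m m)^2 + lam * |Z m m|) :=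
        Finset.sum_lt_sum (fun m _ => hterm Z m) ⟨k, Finset.mem_univ k, hstrict⟩
      linarith [hA]
    -- off-diagonal Frobenius terms vanish
    have hoff : ∀ a b : Fin n, b ≠ a → (s a)^2 * (Z a b)^2 = 0 := by
      intro a b hba
      have h4 := (Finset.sum_eq_zero_iff_of_nonneg
        (fun k _ => Finset.sum_nonneg fun l _ => by positivity)).1 hB a (Finset.mem_univ a)
      exact (Finset.sum_eq_zero_iff_of_nonneg (fun l _ => by positivity)).1 h4 b
        (Finset.mem_erase.mpr ⟨hba, Finset.mem_univ b⟩)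
    -- representation of Z
    have htr : ∑ k, Z k k = nuclearNorm Z := by
      rw [hC]
      exact Finset.sum_congr rfl fun k _ => (abs_of_nonneg (hdiagZ k ▸ hd0 k)).symm
    obtain ⟨V, t, ht0, hrep⟩ := repr_of_trace_eq Z htr
    have hsym : ∀ a b : Fin n, Z a b = Z b a := by
      intro a b
      rw [hrep a b, hrep b a]
      exact Finset.sum_congr rfl fun k _ => by ring
    rcases eq_or_ne (s i) 0 with hsi | hsi
    · rcases eq_or_ne (s j) 0 with hsj | hsj
      · -- both singular values zero
        have hZii : Z i i = 0 := by
          rw [hdiagZ i, ← hd_if i, hsi]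
          simp
        have hzero : ∀ k, t k * V i k = 0 := by
          have h5 : ∑ k, t k * V i k * V i k = 0 := by rw [← hrep i i, hZii]
          intro k
          have h6 := (Finset.sum_eq_zero_iff_of_nonneg
            (fun k _ => by
              have : t k * V i k * V i k = t k * (V i k)^2 := by ring
              rw [this]
              exact mul_nonneg (ht0 k) (sq_nonneg _))).1 h5 k (Finset.mem_univ k)
          rcases mul_eq_zero.1 h6 with h7 | h7
          · exact h7
          · rw [h7, mul_zero]
        rw [hrep i j]
        refine Finset.sum_eq_zero fun k _ => ?_
        rw [hzero k, zero_mul]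
      · -- s j ≠ 0
        have h5 := hoff j i hij
        have h6 : (s j)^2 ≠ 0 := pow_ne_zero 2 hsj
        have h7 : Z j i = 0 := sq_eq_zero_iff.1 ((mul_eq_zero.1 h5).resolve_left h6)
        rw [hsym i j, h7]
    · -- s i ≠ 0
      have h5 := hoff i j (Ne.symm hij)
      have h6 : (s i)^2 ≠ 0 := pow_ne_zero 2 hsi
      exact sq_eq_zero_iff.1 ((mul_eq_zero.1 h5).resolve_left h6)
end

section
/- Let Φ = [Φ₁ Φ₂] be a real d×n matrix partitioned into column blocks of sizes n₁ and n₂ whose column spans intersect only in {0}. Let P be the matrix of the orthogonal projection of ℝⁿ onto the orthogonal complement of ker(Φ) (equivalently, onto the row space of Φ). Then P is block diagonal with respect to the partition: P_{ij} = 0 whenever i ≤ n₁ < j or j ≤ n₁ < i. -/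
open Matrix

/-- For `Φ = [Φ₁ Φ₂]` with column spans intersecting only in `{0}`, the matrix
`P` of the orthogonal projection of `ℝⁿ` onto the orthogonal complement of `ker Φ` (the row
space of `Φ`) is block diagonal with respect to the column partition. -/
theorem rowspace_projection_block_diagonal {d n₁ n₂ : ℕ}
    (Φ : Matrix (Fin d) (Fin n₁ ⊕ Fin n₂) ℝ)
    (hind : LinearMap.range (Φ.submatrix id Sum.inl).mulVecLin ⊓
        LinearMap.range (Φ.submatrix id Sum.inr).mulVecLin = ⊥)
    (P : Matrix (Fin n₁ ⊕ Fin n₂) (Fin n₁ ⊕ Fin n₂) ℝ)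
    (hP : P.toEuclideanLin =
      (LinearMap.ker Φ.toEuclideanLin)ᗮ.subtype ∘ₗ
        (Submodule.orthogonalProjection (LinearMap.ker Φ.toEuclideanLin)ᗮ).toLinearMap) :
    ∀ (i : Fin n₁) (j : Fin n₂),
      P (Sum.inl i) (Sum.inr j) = 0 ∧ P (Sum.inr j) (Sum.inl i) = 0 := by
    classical
  set K := LinearMap.ker Φ.toEuclideanLin with hK
  have hsplit : ∀ x : Fin n₁ ⊕ Fin n₂ → ℝ,
      Φ *ᵥ x = (Φ.submatrix id Sum.inl) *ᵥ (x ∘ Sum.inl)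
        + (Φ.submatrix id Sum.inr) *ᵥ (x ∘ Sum.inr) := by
    intro x; funext r
    simp [mulVec, dotProduct, Fintype.sum_sum_type, submatrix]
  have hmemK : ∀ x : EuclideanSpace ℝ (Fin n₁ ⊕ Fin n₂),
      x ∈ K ↔ Φ *ᵥ (x : Fin n₁ ⊕ Fin n₂ → ℝ) = 0 := by
    intro x
    constructor
    · intro hx
      have : Φ.toEuclideanLin x = 0 := hx
      exact congrArg (WithLp.equiv 2 (Fin d → ℝ)) this
    · intro hx
      show Φ.toEuclideanLin x = 0
      exact congrArg (WithLp.equiv 2 (Fin d → ℝ)).symm hx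
  -- the coordinate zeroing maps
  let πl : EuclideanSpace ℝ (Fin n₁ ⊕ Fin n₂) → EuclideanSpace ℝ (Fin n₁ ⊕ Fin n₂) :=
    fun x => WithLp.toLp 2 (Sum.elim (fun i => x (Sum.inl i)) (fun _ => 0))
  let πr : EuclideanSpace ℝ (Fin n₁ ⊕ Fin n₂) → EuclideanSpace ℝ (Fin n₁ ⊕ Fin n₂) :=
    fun x => WithLp.toLp 2 (Sum.elim (fun _ => 0) (fun j => x (Sum.inr j)))
  -- if x ∈ K then the two block pieces of x are each in K
  have hblock : ∀ x ∈ K, (Φ.submatrix id Sum.inl) *ᵥ (fun i => x (Sum.inl i)) = 0 ∧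
      (Φ.submatrix id Sum.inr) *ᵥ (fun j => x (Sum.inr j)) = 0 := by
    intro x hx
    have h0 := (hmemK x).1 hx
    rw [hsplit] at h0
    have h1 : (Φ.submatrix id Sum.inl) *ᵥ (fun i => x (Sum.inl i))
        = - ((Φ.submatrix id Sum.inr) *ᵥ (fun j => x (Sum.inr j))) := by
      have := eq_neg_of_add_eq_zero_left h0
      exact this
    have hmem : (Φ.submatrix id Sum.inl) *ᵥ (fun i => x (Sum.inl i)) ∈
        LinearMap.range (Φ.submatrix id Sum.inl).mulVecLin ⊓
        LinearMap.range (Φ.submatrix id Sum.inr).mulVecLin := by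
      refine ⟨⟨_, rfl⟩, ⟨-(fun j => x (Sum.inr j)), ?_⟩⟩
      simp [mulVecLin_apply, mulVec_neg, h1]
    rw [hind] at hmem
    have hz : (Φ.submatrix id Sum.inl) *ᵥ (fun i => x (Sum.inl i)) = 0 :=
      Submodule.mem_bot _ |>.1 hmem
    refine ⟨hz, ?_⟩
    have := h1 ▸ hz
    simpa [neg_eq_zero] using this.symm
  -- πl and πr preserve K
  have hπlK : ∀ x ∈ K, πl x ∈ K := by
    intro x hx
    rw [hmemK, hsplit]
    have h := (hblock x hx).1
    have e1 : ((πl x : Fin n₁ ⊕ Fin n₂ → ℝ) ∘ Sum.inl) = fun i => x (Sum.inl i) := rfl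
    have e2 : ((πl x : Fin n₁ ⊕ Fin n₂ → ℝ) ∘ Sum.inr) = fun _ => (0:ℝ) := rfl
    rw [e1, e2, h]
    simp only [zero_add]
    exact mulVec_zero _
  have hπrK : ∀ x ∈ K, πr x ∈ K := by
    intro x hx
    rw [hmemK, hsplit]
    have h := (hblock x hx).2
    have e1 : ((πr x : Fin n₁ ⊕ Fin n₂ → ℝ) ∘ Sum.inl) = fun _ => (0:ℝ) := rfl
    have e2 : ((πr x : Fin n₁ ⊕ Fin n₂ → ℝ) ∘ Sum.inr) = fun j => x (Sum.inr j) := rfl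
    rw [e1, e2, h]
    simp only [add_zero]
    exact mulVec_zero _
  -- πl, πr are self-adjoint
  have hπl_adj : ∀ x y : EuclideanSpace ℝ (Fin n₁ ⊕ Fin n₂),
      (inner ℝ (πl x) y : ℝ) = inner ℝ x (πl y) := by
    intro x y
    simp [PiLp.inner_apply, Fintype.sum_sum_type, πl, RCLike.inner_apply]
  have hπr_adj : ∀ x y : EuclideanSpace ℝ (Fin n₁ ⊕ Fin n₂),
      (inner ℝ (πr x) y : ℝ) = inner ℝ x (πr y) := by
    intro x y
    simp [PiLp.inner_apply, Fintype.sum_sum_type, πr, RCLike.inner_apply]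
  -- hence πl, πr preserve Kᗮ
  have hπlKo : ∀ y ∈ Kᗮ, πl y ∈ Kᗮ := by
    intro y hy
    rw [Submodule.mem_orthogonal]
    intro u hu
    have : (inner ℝ (πl u) y : ℝ) = inner ℝ u (πl y) := hπl_adj u y
    rw [← this]
    exact hy (πl u) (hπlK u hu)
  have hπrKo : ∀ y ∈ Kᗮ, πr y ∈ Kᗮ := by
    intro y hy
    rw [Submodule.mem_orthogonal]
    intro u hu
    have : (inner ℝ (πr u) y : ℝ) = inner ℝ u (πr y) := hπr_adj u y
    rw [← this]
    exact hy (πr u) (hπrK u hu)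
  -- a general vanishing lemma
  intro i j
  constructor
  · -- v = e_{inr j}
    set v : EuclideanSpace ℝ (Fin n₁ ⊕ Fin n₂) := EuclideanSpace.single (Sum.inr j) (1:ℝ) with hv
    set p : Kᗮ := Submodule.orthogonalProjection Kᗮ v with hp
    have hvp : v - (p : EuclideanSpace ℝ (Fin n₁ ⊕ Fin n₂)) ∈ K := by
      have h1 : v - (p : EuclideanSpace ℝ (Fin n₁ ⊕ Fin n₂)) ∈ Kᗮᗮ :=
        Submodule.sub_starProjection_mem_orthogonal (K := Kᗮ) v
      rwa [Submodule.orthogonal_orthogonal] at h1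
    have hπlv : πl v = 0 := by
      ext k
      cases k with
      | inl a => show v (Sum.inl a) = 0; simp [hv, EuclideanSpace.single_apply]
      | inr b => rfl
    have hadd : πl v = πl (v - (p:EuclideanSpace ℝ (Fin n₁ ⊕ Fin n₂))) + πl (p:EuclideanSpace ℝ (Fin n₁ ⊕ Fin n₂)) := by
      ext k; cases k with
      | inl a => show v (Sum.inl a) = (v (Sum.inl a) - (p:EuclideanSpace ℝ (Fin n₁ ⊕ Fin n₂)) (Sum.inl a)) + (p:EuclideanSpace ℝ (Fin n₁ ⊕ Fin n₂)) (Sum.inl a); ring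
      | inr b => show (0:ℝ) = 0 + 0; ring
    have hπlp_K : πl (p:EuclideanSpace ℝ (Fin n₁ ⊕ Fin n₂)) ∈ K := by
      have : πl (p:EuclideanSpace ℝ (Fin n₁ ⊕ Fin n₂)) = - πl (v - (p:EuclideanSpace ℝ (Fin n₁ ⊕ Fin n₂))) := by
        have := hadd; rw [hπlv] at this
        exact eq_neg_of_add_eq_zero_right this.symm
      rw [this]
      exact neg_mem (hπlK _ hvp)
    have hπlp_Ko : πl (p:EuclideanSpace ℝ (Fin n₁ ⊕ Fin n₂)) ∈ Kᗮ := hπlKo _ p.2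
    have hzero : πl (p:EuclideanSpace ℝ (Fin n₁ ⊕ Fin n₂)) = 0 := by
      have h := (Submodule.mem_orthogonal K _).1 hπlp_Ko _ hπlp_K
      exact inner_self_eq_zero.mp h
    have hpl : (p:EuclideanSpace ℝ (Fin n₁ ⊕ Fin n₂)) (Sum.inl i) = 0 := by
      have := congrArg (fun z => z (Sum.inl i)) hzero
      exact this
    -- now compute P (inl i) (inr j)
    have hPv : P.toEuclideanLin v = (p:EuclideanSpace ℝ (Fin n₁ ⊕ Fin n₂)) := by
      rw [hP]; rfl
    have hmv : (P *ᵥ (v : Fin n₁ ⊕ Fin n₂ → ℝ)) = (p : Fin n₁ ⊕ Fin n₂ → ℝ) :=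
      congrArg (WithLp.equiv 2 _) hPv
    have : (P *ᵥ (v : Fin n₁ ⊕ Fin n₂ → ℝ)) (Sum.inl i) = P (Sum.inl i) (Sum.inr j) := by
      simp [hv, mulVec, dotProduct, EuclideanSpace.single_apply]
    rw [hmv] at this
    rw [← this]; exact hpl
  · set v : EuclideanSpace ℝ (Fin n₁ ⊕ Fin n₂) := EuclideanSpace.single (Sum.inl i) (1:ℝ) with hv
    set p : Kᗮ := Submodule.orthogonalProjection Kᗮ v with hp
    have hvp : v - (p : EuclideanSpace ℝ (Fin n₁ ⊕ Fin n₂)) ∈ K := by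
      have h1 : v - (p : EuclideanSpace ℝ (Fin n₁ ⊕ Fin n₂)) ∈ Kᗮᗮ :=
        Submodule.sub_starProjection_mem_orthogonal (K := Kᗮ) v
      rwa [Submodule.orthogonal_orthogonal] at h1
    have hπrv : πr v = 0 := by
      ext k
      cases k with
      | inl a => rfl
      | inr b => show v (Sum.inr b) = 0; simp [hv, EuclideanSpace.single_apply]
    have hadd : πr v = πr (v - (p:EuclideanSpace ℝ (Fin n₁ ⊕ Fin n₂))) + πr (p:EuclideanSpace ℝ (Fin n₁ ⊕ Fin n₂)) := by
      ext k; cases k with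
      | inl a => show (0:ℝ) = 0 + 0; ring
      | inr b => show v (Sum.inr b) = (v (Sum.inr b) - (p:EuclideanSpace ℝ (Fin n₁ ⊕ Fin n₂)) (Sum.inr b)) + (p:EuclideanSpace ℝ (Fin n₁ ⊕ Fin n₂)) (Sum.inr b); ring
    have hπrp_K : πr (p:EuclideanSpace ℝ (Fin n₁ ⊕ Fin n₂)) ∈ K := by
      have : πr (p:EuclideanSpace ℝ (Fin n₁ ⊕ Fin n₂)) = - πr (v - (p:EuclideanSpace ℝ (Fin n₁ ⊕ Fin n₂))) := by
        have := hadd; rw [hπrv] at this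
        exact eq_neg_of_add_eq_zero_right this.symm
      rw [this]
      exact neg_mem (hπrK _ hvp)
    have hπrp_Ko : πr (p:EuclideanSpace ℝ (Fin n₁ ⊕ Fin n₂)) ∈ Kᗮ := hπrKo _ p.2
    have hzero : πr (p:EuclideanSpace ℝ (Fin n₁ ⊕ Fin n₂)) = 0 := by
      have h := (Submodule.mem_orthogonal K _).1 hπrp_Ko _ hπrp_K
      exact inner_self_eq_zero.mp h
    have hpr : (p:EuclideanSpace ℝ (Fin n₁ ⊕ Fin n₂)) (Sum.inr j) = 0 := congrArg (fun z => z (Sum.inr j)) hzero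
    have hPv : P.toEuclideanLin v = (p:EuclideanSpace ℝ (Fin n₁ ⊕ Fin n₂)) := by
      rw [hP]; rfl
    have hmv : (P *ᵥ (v : Fin n₁ ⊕ Fin n₂ → ℝ)) = (p : Fin n₁ ⊕ Fin n₂ → ℝ) :=
      congrArg (WithLp.equiv 2 _) hPv
    have : (P *ᵥ (v : Fin n₁ ⊕ Fin n₂ → ℝ)) (Sum.inr j) = P (Sum.inr j) (Sum.inl i) := by
      simp [hv, mulVec, dotProduct, EuclideanSpace.single_apply]
    rw [hmv] at this
    rw [← this]; exact hpr
end
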